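/- A session type η is complete if and only if 1 + η ⊑ η, where ⊑ is the strong subsession relation. -/

import Mathlib

/- Values and value types: values are integers or booleans, value types are sets of values. -/
abbrev Value := ℤ ⊕ Bool
abbrev VType := Set Value

def tInt : VType := Set.range Sum.inl
def tBool : VType := Set.range Sum.inr

/-- Session types: failure, success, value input/output, channel input/output (delegation),
external choice, internal choice, parallel composition. -/
inductive SessionType : Type
  | fail
  | succ
  | inV (t : VType) (η : SessionType)
  | outV (t : VType) (η : SessionType)
  | inS (ρ : SessionType) (η : SessionType)
  | outS (ρ : SessionType) (η : SessionType)
  | choice (η θ : SessionType)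
  | ichoice (η θ : SessionType)
  | par (η θ : SessionType)

open SessionType

/-- Labels of visible transitions. -/
inductive Label : Type
  | tick
  | inV (v : Value)
  | outV (v : Value)
  | inS (ρ : SessionType)
  | outS (ρ : SessionType)

/-- Visible (labeled) transitions of session types (rules r1,r3,r4,r5,r7,r9,r11,r12
and the symmetric variants). -/
inductive Vis : SessionType → Label → SessionType → Prop
  | r1 : Vis succ Label.tick succ
  | r3 (v : Value) (η : SessionType) : Vis (outV {v} η) (Label.outV v) η
  | r4 (ρ η : SessionType) : Vis (outS ρ η) (Label.outS ρ) η
  | r5 (ρ η : SessionType) : Vis (inS ρ η) (Label.inS ρ) η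
  | r7 {v : Value} {t : VType} (η : SessionType) : v ∈ t → Vis (inV t η) (Label.inV v) η
  | r9l {η μ η'} (θ : SessionType) : Vis η μ η' → Vis (choice η θ) μ η'
  | r9r {θ μ θ'} (η : SessionType) : Vis θ μ θ' → Vis (choice η θ) μ θ'
  | r11l {η μ η'} (θ : SessionType) : Vis η μ η' → μ ≠ Label.tick → Vis (par η θ) μ (par η' θ)
  | r11r {θ μ θ'} (η : SessionType) : Vis θ μ θ' → μ ≠ Label.tick → Vis (par η θ) μ (par η θ')
  | r12 {η η' θ θ' : SessionType} : Vis η Label.tick η' → Vis θ Label.tick θ' →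
      Vis (par η θ) Label.tick (par η' θ')

/-- Internal (unlabeled) transitions of session types (rules r2,r6,r8,r10,r13,r14,r15 and
symmetric variants), parameterized by the subtyping relation `sub` used in rules r14/r15. -/
inductive Red (sub : SessionType → SessionType → Prop) : SessionType → SessionType → Prop
  | r2l (η θ : SessionType) : Red sub (ichoice η θ) η
  | r2r (η θ : SessionType) : Red sub (ichoice η θ) θ
  | r6 {v : Value} {t : VType} (η : SessionType) : v ∈ t → Red sub (outV t η) (outV {v} η)
  | r8l {η η'} (θ : SessionType) : Red sub η η' → Red sub (choice η θ) (choice η' θ)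
  | r8r {θ θ'} (η : SessionType) : Red sub θ θ' → Red sub (choice η θ) (choice η θ')
  | r10l {η η'} (θ : SessionType) : Red sub η η' → Red sub (par η θ) (par η' θ)
  | r10r {θ θ'} (η : SessionType) : Red sub θ θ' → Red sub (par η θ) (par η θ')
  | r13l {η η' θ θ' : SessionType} {v : Value} : Vis η (Label.outV v) η' →
      Vis θ (Label.inV v) θ' → Red sub (par η θ) (par η' θ')
  | r13r {η η' θ θ' : SessionType} {v : Value} : Vis η (Label.inV v) η' →
      Vis θ (Label.outV v) θ' → Red sub (par η θ) (par η' θ')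
  | r14l {η η' θ θ' ρ ρ' : SessionType} : Vis η (Label.outS ρ) η' →
      Vis θ (Label.inS ρ') θ' → sub ρ ρ' → Red sub (par η θ) (par η' θ')
  | r14r {η η' θ θ' ρ ρ' : SessionType} : Vis η (Label.inS ρ') η' →
      Vis θ (Label.outS ρ) θ' → sub ρ ρ' → Red sub (par η θ) (par η' θ')
  | r15l {η η' θ θ' ρ ρ' : SessionType} : Vis η (Label.outS ρ) η' →
      Vis θ (Label.inS ρ') θ' → ¬ sub ρ ρ' → Red sub (par η θ) fail
  | r15r {η η' θ θ' ρ ρ' : SessionType} : Vis η (Label.inS ρ') η' →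
      Vis θ (Label.outS ρ) θ' → ¬ sub ρ ρ' → Red sub (par η θ) fail

/-- Weight of a session type: nesting depth of session types occurring in channel
input/output prefixes (used to break the circularity between transitions and subsession). -/
def weight : SessionType → ℕ
  | fail => 0
  | succ => 0
  | inV _ η => weight η
  | outV _ η => weight η
  | inS ρ η => max (weight ρ + 1) (weight η)
  | outS ρ η => max (weight ρ + 1) (weight η)
  | choice η θ => max (weight η) (weight θ)
  | ichoice η θ => max (weight η) (weight θ)
  | par η θ => max (weight η) (weight θ)

/-- Reflexive-transitive closure of internal transitions. -/
def Reds (sub : SessionType → SessionType → Prop) : SessionType → SessionType → Prop :=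
  Relation.ReflTransGen (Red sub)

/-- η can weakly perform the success action ✓. -/
def CanTick (sub : SessionType → SessionType → Prop) (η : SessionType) : Prop :=
  ∃ η' η'', Reds sub η η' ∧ Vis η' Label.tick η''

/-- Completeness: every internal reduct can weakly perform ✓. -/
def CompleteP (sub : SessionType → SessionType → Prop) (η : SessionType) : Prop :=
  ∀ η', Reds sub η η' → CanTick sub η'

/-- Subsession: preservation of completeness in all parallel contexts. -/
def PreceqP (sub : SessionType → SessionType → Prop) (η θ : SessionType) : Prop :=
  ∀ ρ, CompleteP sub (par η ρ) → CompleteP sub (par θ ρ)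

/-- Stratified approximations of the subsession relation. -/
def SubW : ℕ → SessionType → SessionType → Prop
  | 0 => fun _ _ => True
  | n + 1 => PreceqP (SubW n)

/-- The (stratified) subtyping relation used in the synchronization rules r14/r15:
at weight `n` it only depends on the strata below. -/
def SubRel (ρ ρ' : SessionType) : Prop := SubW (max (weight ρ) (weight ρ') + 1) ρ ρ'

/-- η is complete. -/
def SComplete (η : SessionType) : Prop := CompleteP SubRel η

/-- The subsession relation η ⪯ θ. -/
def Preceq (η θ : SessionType) : Prop := PreceqP SubRel η θ

/-- The equivalence ≈ induced by ⪯. -/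
def SEquiv (η θ : SessionType) : Prop := Preceq η θ ∧ Preceq θ η

/-- η is viable if some parallel context completes it. -/
def Viable (η : SessionType) : Prop := ∃ ρ, SComplete (par η ρ)

/-- Strong subsession η ⊑ θ : the closure of ⪯ under external-choice contexts. -/
def SSub (η θ : SessionType) : Prop := ∀ ρ, Preceq (choice η ρ) (choice θ ρ)

/-- The equivalence ≃ induced by ⊑. -/
def SSEquiv (η θ : SessionType) : Prop := SSub η θ ∧ SSub θ η

/-- Actions (prefixes) of session types. -/
inductive Act : Type
  | inV (t : VType)
  | outV (t : VType)
  | inS (ρ : SessionType)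
  | outS (ρ : SessionType)

/-- Prefixing a session type by an action. -/
def Act.pre : Act → SessionType → SessionType
  | .inV t, η => SessionType.inV t η
  | .outV t, η => SessionType.outV t η
  | .inS ρ, η => SessionType.inS ρ η
  | .outS ρ, η => SessionType.outS ρ η


section AuxProof

open Relation

private lemma reds_ctx {sub : SessionType → SessionType → Prop} {a a' b b' c c' : SessionType}
    (ha : Reds sub a a') (hb : Reds sub b b') (hc : Reds sub c c') :
    Reds sub (par (choice a b) c) (par (choice a' b') c') :=
  (ReflTransGen.lift (fun x => par (choice x b) c)
    (fun _ _ h => Red.r10l _ (Red.r8l _ h)) _ _ ha).trans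
  ((ReflTransGen.lift (fun x => par (choice a' x) c)
    (fun _ _ h => Red.r10l _ (Red.r8r _ h)) _ _ hb).trans
  (ReflTransGen.lift (fun x => par (choice a' b') x)
    (fun _ _ h => Red.r10r _ h) _ _ hc))

private lemma reds_big {sub : SessionType → SessionType → Prop} {a a' b b' c c' : SessionType}
    (ha : Reds sub a a') (hb : Reds sub b b') (hc : Reds sub c c') :
    Reds sub (par (choice (choice succ a) b) c) (par (choice (choice succ a') b') c') :=
  reds_ctx (ReflTransGen.lift (fun x => choice succ x) (fun _ _ h => Red.r8r _ h) _ _ ha) hb hc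

private lemma vis_lift {a b K : SessionType} {μ : Label} (h : Vis (choice a b) μ K) :
    Vis (choice (choice succ a) b) μ K := by
  cases h with
  | r9l _ h => exact Vis.r9l _ (Vis.r9r _ h)
  | r9r _ h => exact Vis.r9r _ h

private lemma vis_drop {a b K : SessionType} {μ : Label} (h : Vis (choice (choice succ a) b) μ K)
    (hμ : μ ≠ Label.tick) : Vis (choice a b) μ K := by
  cases h with
  | r9l _ h =>
    cases h with
    | r9l _ h => cases h; exact absurd rfl hμ
    | r9r _ h => exact Vis.r9l _ h
  | r9r _ h => exact Vis.r9r _ h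

/-- Decomposition of reducts of the "small" parallel composition. -/
private lemma redsB (η ρ σ : SessionType) :
    ∀ X, Reds SubRel (par (choice η ρ) σ) X →
      (∃ η' ρ' σ', X = par (choice η' ρ') σ' ∧ Reds SubRel η η' ∧ Reds SubRel ρ ρ' ∧
        Reds SubRel σ σ') ∨
      Reds SubRel (par (choice (choice succ η) ρ) σ) X := by
  intro X h
  induction h with
  | refl => exact Or.inl ⟨η, ρ, σ, rfl, .refl, .refl, .refl⟩
  | tail hab step ih =>
    rcases ih with ⟨η', ρ', σ', rfl, hη, hρ, hσ⟩ | hbig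
    · cases step with
      | r10l _ h =>
        cases h with
        | r8l _ h => exact Or.inl ⟨_, ρ', σ', rfl, hη.tail h, hρ, hσ⟩
        | r8r _ h => exact Or.inl ⟨η', _, σ', rfl, hη, hρ.tail h, hσ⟩
      | r10r _ h => exact Or.inl ⟨η', ρ', _, rfl, hη, hρ, hσ.tail h⟩
      | r13l hv hw => exact Or.inr ((reds_big hη hρ hσ).tail (Red.r13l (vis_lift hv) hw))
      | r13r hv hw => exact Or.inr ((reds_big hη hρ hσ).tail (Red.r13r (vis_lift hv) hw))
      | r14l hv hw hs => exact Or.inr ((reds_big hη hρ hσ).tail (Red.r14l (vis_lift hv) hw hs))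
      | r14r hv hw hs => exact Or.inr ((reds_big hη hρ hσ).tail (Red.r14r (vis_lift hv) hw hs))
      | r15l hv hw hs => exact Or.inr ((reds_big hη hρ hσ).tail (Red.r15l (vis_lift hv) hw hs))
      | r15r hv hw hs => exact Or.inr ((reds_big hη hρ hσ).tail (Red.r15r (vis_lift hv) hw hs))
    · exact Or.inr (hbig.tail step)

/-- Decomposition of reducts of the "big" parallel composition. -/
private lemma redsA (η ρ σ : SessionType) :
    ∀ X, Reds SubRel (par (choice (choice succ η) ρ) σ) X →
      (∃ η' ρ' σ', X = par (choice (choice succ η') ρ') σ' ∧ Reds SubRel η η' ∧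
        Reds SubRel ρ ρ' ∧ Reds SubRel σ σ') ∨
      Reds SubRel (par (choice η ρ) σ) X := by
  intro X h
  induction h with
  | refl => exact Or.inl ⟨η, ρ, σ, rfl, .refl, .refl, .refl⟩
  | tail hab step ih =>
    rcases ih with ⟨η', ρ', σ', rfl, hη, hρ, hσ⟩ | hsmall
    · cases step with
      | r10l _ h =>
        cases h with
        | r8l _ h =>
          cases h with
          | r8l _ h => cases h
          | r8r _ h => exact Or.inl ⟨_, ρ', σ', rfl, hη.tail h, hρ, hσ⟩
        | r8r _ h => exact Or.inl ⟨η', _, σ', rfl, hη, hρ.tail h, hσ⟩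
      | r10r _ h => exact Or.inl ⟨η', ρ', _, rfl, hη, hρ, hσ.tail h⟩
      | r13l hv hw =>
        exact Or.inr ((reds_ctx hη hρ hσ).tail (Red.r13l (vis_drop hv (by nofun)) hw))
      | r13r hv hw =>
        exact Or.inr ((reds_ctx hη hρ hσ).tail (Red.r13r (vis_drop hv (by nofun)) hw))
      | r14l hv hw hs =>
        exact Or.inr ((reds_ctx hη hρ hσ).tail (Red.r14l (vis_drop hv (by nofun)) hw hs))
      | r14r hv hw hs =>
        exact Or.inr ((reds_ctx hη hρ hσ).tail (Red.r14r (vis_drop hv (by nofun)) hw hs))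
      | r15l hv hw hs =>
        exact Or.inr ((reds_ctx hη hρ hσ).tail (Red.r15l (vis_drop hv (by nofun)) hw hs))
      | r15r hv hw hs =>
        exact Or.inr ((reds_ctx hη hρ hσ).tail (Red.r15r (vis_drop hv (by nofun)) hw hs))
    · exact Or.inr (hsmall.tail step)

/-- Reducts of `par (choice a fail) succ` keep their shape. -/
private lemma redsC (a : SessionType) :
    ∀ X, Reds SubRel (par (choice a fail) succ) X →
      ∃ a', X = par (choice a' fail) succ ∧ Reds SubRel a a' := by
  intro X h
  induction h with
  | refl => exact ⟨a, rfl, .refl⟩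
  | tail hab step ih =>
    obtain ⟨a', rfl, ha⟩ := ih
    cases step with
    | r10l _ h =>
      cases h with
      | r8l _ h => exact ⟨_, rfl, ha.tail h⟩
      | r8r _ h => cases h
    | r10r _ h => cases h
    | r13l hv hw => cases hw
    | r13r hv hw => cases hw
    | r14l hv hw hs => cases hw
    | r14r hv hw hs => cases hw
    | r15l hv hw hs => cases hw
    | r15r hv hw hs => cases hw

/-- Reducts of `choice succ b` keep their `succ` branch. -/
private lemma redsD {sub : SessionType → SessionType → Prop} (b : SessionType) :
    ∀ c, Reds sub (choice succ b) c → ∃ b', c = choice succ b' := by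
  intro c h
  induction h with
  | refl => exact ⟨b, rfl⟩
  | tail hab step ih =>
    obtain ⟨b', rfl⟩ := ih
    cases step with
    | r8l _ h => cases h
    | r8r _ h => exact ⟨_, rfl⟩

end AuxProof

theorem complete_iff_ssub (η : SessionType) :
    SComplete η ↔ SSub (SessionType.choice SessionType.succ η) η := by
  constructor
  · -- completeness implies 1 + η ⊑ η
    intro hC ρ σ Hbig X hX
    rcases redsB η ρ σ X hX with ⟨η', ρ', σ', rfl, hη, hρ, hσ⟩ | hbig
    · obtain ⟨Z, Z', hZ, htick⟩ := Hbig _ (reds_big hη hρ hσ)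
      rcases redsA η' ρ' σ' Z hZ with ⟨η'', ρ'', σ'', rfl, hη2, hρ2, hσ2⟩ | hsmall
      · cases htick with
        | r11l _ h hne => exact absurd rfl hne
        | r11r _ h hne => exact absurd rfl hne
        | r12 hl hr =>
          cases hl with
          | r9l _ h =>
            cases h with
            | r9l _ h =>
              obtain ⟨η₃, η₄, hred3, htick3⟩ := hC η'' (hη.trans hη2)
              exact ⟨_, _, (reds_ctx hη2 hρ2 hσ2).trans (reds_ctx hred3 .refl .refl),
                Vis.r12 (Vis.r9l _ htick3) hr⟩
            | r9r _ h =>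
              exact ⟨_, _, reds_ctx hη2 hρ2 hσ2, Vis.r12 (Vis.r9l _ h) hr⟩
          | r9r _ h =>
            exact ⟨_, _, reds_ctx hη2 hρ2 hσ2, Vis.r12 (Vis.r9r _ h) hr⟩
      · exact ⟨Z, Z', hsmall, htick⟩
    · exact Hbig X hbig
  · -- 1 + η ⊑ η implies completeness
    intro hS X hX
    have H1 : CompleteP SubRel
        (par (choice (choice succ η) SessionType.fail) succ) := by
      intro W hW
      obtain ⟨a', rfl, ha⟩ := redsC _ W hW
      obtain ⟨b', rfl⟩ := redsD η a' ha
      exact ⟨_, _, .refl, Vis.r12 (Vis.r9l _ (Vis.r9l _ Vis.r1)) Vis.r1⟩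
    have H2 : CompleteP SubRel (par (choice η SessionType.fail) succ) :=
      hS SessionType.fail succ H1
    obtain ⟨Z, Z', hZ, ht⟩ := H2 _ (reds_ctx hX .refl .refl)
    obtain ⟨X', rfl, hX'⟩ := redsC X Z hZ
    cases ht with
    | r11l _ h hne => exact absurd rfl hne
    | r11r _ h hne => exact absurd rfl hne
    | r12 hl hr =>
      cases hl with
      | r9l _ h => exact ⟨X', _, hX', h⟩
      | r9r _ h => cases h
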